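/- Let x, y ∈ X, and let a, b be two distinct points of the Gromov boundary of a δ-hyperbolic geodesic space X. Then there is a constant M₁ > 0 such that the Gromov product (f(n) | g(m))_y ≤ M₁ for all geodesic rays f from x to a and g from y to b and all n, m ≥ 0. -/
import Mathlib


open scoped NNReal

/-- δ-hyperbolicity via the Gromov four-point condition. -/
def IsDeltaHyperbolic (X : Type*) [MetricSpace X] (δ : ℝ) : Prop :=
  ∀ x y z w : X,
    dist x y + dist z w ≤ max (dist x z + dist y w) (dist x w + dist y z) + 2 * δ

/-- A geodesic metric space. -/
def IsGeodesicSpace (X : Type*) [MetricSpace X] : Prop :=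
  ∀ x y : X, ∃ f : ℝ → X, f 0 = x ∧ f (dist x y) = y ∧
    ∀ s t : ℝ, s ∈ Set.Icc 0 (dist x y) → t ∈ Set.Icc 0 (dist x y) →
      dist (f s) (f t) = |s - t|

/-- A geodesic ray, parametrized by `ℝ≥0`. -/
def IsGeodesicRay {X : Type*} [MetricSpace X] (g : ℝ≥0 → X) : Prop :=
  ∀ s t : ℝ≥0, dist (g s) (g t) = |(s : ℝ) - (t : ℝ)|

/-- The Gromov product `(u|v)_y = (d(u,y) + d(v,y) − d(u,v))/2`. -/
noncomputable def gromovProd {X : Type*} [MetricSpace X] (y u v : X) : ℝ :=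
  (dist u y + dist v y - dist u v) / 2

/-- `h` is a geodesic ray from `y` to the boundary point determined by the
reference geodesic ray `a`. -/
def RayTo {X : Type*} [MetricSpace X] (y : X) (a : ℝ≥0 → X) (h : ℝ≥0 → X) : Prop :=
  IsGeodesicRay h ∧ h 0 = y ∧
    EMetric.hausdorffEdist (Set.range h) (Set.range a) ≠ ⊤

section AuxGromov

variable {X : Type*} [MetricSpace X]

lemma gp_nonneg (y u v : X) : 0 ≤ gromovProd y u v := by
  have h := dist_triangle u y v
  have h2 : dist y v = dist v y := dist_comm y v
  unfold gromovProd; linarith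

lemma gp_le_dist (y u v : X) : gromovProd y u v ≤ dist u y := by
  have h := dist_triangle v u y
  have h2 : dist v u = dist u v := dist_comm v u
  unfold gromovProd; linarith

lemma gp_comm (y u v : X) : gromovProd y u v = gromovProd y v u := by
  unfold gromovProd; rw [dist_comm u v]; ring

lemma gp_lip (y u u' v : X) : gromovProd y u v ≤ gromovProd y u' v + dist u u' := by
  have h1 : dist u y ≤ dist u u' + dist u' y := dist_triangle _ _ _
  have h2 : dist u' v ≤ dist u' u + dist u v := dist_triangle _ _ _
  have h3 : dist u' u = dist u u' := dist_comm _ _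
  unfold gromovProd; linarith

lemma gp_min {δ : ℝ} (hhyp : IsDeltaHyperbolic X δ) (u v w y : X) :
    min (gromovProd y u v) (gromovProd y v w) - δ ≤ gromovProd y u w := by
  have h := hhyp u w v y
  have hc : dist w v = dist v w := dist_comm w v
  have m1 := min_le_left (gromovProd y u v) (gromovProd y v w)
  have m2 := min_le_right (gromovProd y u v) (gromovProd y v w)
  rcases max_cases (dist u v + dist w y) (dist u y + dist w v) with ⟨heq, _⟩ | ⟨heq, _⟩ <;>
    rw [heq] at h <;> unfold gromovProd at * <;> linarith

lemma ray_bound {δ : ℝ} (hδ : 0 ≤ δ) (hhyp : IsDeltaHyperbolic X δ) (y : X)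
    (a b : ℝ≥0 → X) (ha : IsGeodesicRay a) (hb : IsGeodesicRay b)
    (hab : EMetric.hausdorffEdist (Set.range a) (Set.range b) = ⊤) :
    ∃ S : ℝ, 0 ≤ S ∧ ∀ n m : ℝ≥0, gromovProd y (a n) (b m) ≤ S := by
  by_contra hcon
  push_neg at hcon
  set ra := dist (a 0) y with hra
  set rb := dist (b 0) y with hrb
  have hra0 : 0 ≤ ra := dist_nonneg
  have hrb0 : 0 ≤ rb := dist_nonneg
  have key : ∀ t : ℝ≥0, dist (a t) (b t) ≤ 3*ra + 3*rb + 4*δ := by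
    intro t
    obtain ⟨n, m, hnm⟩ := hcon ((t:ℝ) + ra + rb + 1) (by positivity)
    -- basic distances
    have dan0 : dist (a n) (a 0) = (n:ℝ) := by rw [ha n 0]; simp
    have dat0 : dist (a t) (a 0) = (t:ℝ) := by rw [ha t 0]; simp
    have dbm0 : dist (b m) (b 0) = (m:ℝ) := by rw [hb m 0]; simp
    have dbt0 : dist (b t) (b 0) = (t:ℝ) := by rw [hb t 0]; simp
    have tri1 : dist (a n) (a 0) ≤ dist (a n) y + dist y (a 0) := dist_triangle _ _ _
    have tri2 : dist (a t) (a 0) ≤ dist (a t) y + dist y (a 0) := dist_triangle _ _ _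
    have tri3 : dist (b m) (b 0) ≤ dist (b m) y + dist y (b 0) := dist_triangle _ _ _
    have tri4 : dist (b t) (b 0) ≤ dist (b t) y + dist y (b 0) := dist_triangle _ _ _
    have tri5 : dist (a n) y ≤ dist (a n) (a 0) + dist (a 0) y := dist_triangle _ _ _
    have tri6 : dist (a t) y ≤ dist (a t) (a 0) + dist (a 0) y := dist_triangle _ _ _
    have tri7 : dist (b m) y ≤ dist (b m) (b 0) + dist (b 0) y := dist_triangle _ _ _
    have tri8 : dist (b t) y ≤ dist (b t) (b 0) + dist (b 0) y := dist_triangle _ _ _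
    have hcy1 : dist y (a 0) = ra := dist_comm y (a 0)
    have hcy2 : dist y (b 0) = rb := dist_comm y (b 0)
    -- n, m are large
    have hn1 : gromovProd y (a n) (b m) ≤ dist (a n) y := gp_le_dist _ _ _
    have hm1 : gromovProd y (a n) (b m) ≤ dist (b m) y := by
      rw [gp_comm]; exact gp_le_dist _ _ _
    have htn : (t:ℝ) ≤ n := by linarith
    have htm : (t:ℝ) ≤ m := by linarith
    have datan : dist (a t) (a n) = (n:ℝ) - t := by
      rw [ha t n, abs_of_nonpos (by linarith)]; ring
    have dbtbm : dist (b m) (b t) = (m:ℝ) - t := by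
      rw [hb m t, abs_of_nonneg (by linarith)]
    -- product lower bounds
    have X1 : (t:ℝ) - ra ≤ gromovProd y (a t) (a n) := by
      unfold gromovProd; rw [datan]; linarith
    have X3 : (t:ℝ) - rb ≤ gromovProd y (b m) (b t) := by
      unfold gromovProd; rw [dbtbm]; linarith
    have C1 := gp_min hhyp (a n) (b m) (b t) y
    have C2 := gp_min hhyp (a t) (a n) (b t) y
    have hmin1 : (t:ℝ) - ra - rb ≤ min (gromovProd y (a n) (b m)) (gromovProd y (b m) (b t)) :=
      le_min (by linarith) (by linarith)
    have A1 : (t:ℝ) - ra - rb - δ ≤ gromovProd y (a n) (b t) := by linarith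
    have hmin2 : (t:ℝ) - ra - rb - δ ≤ min (gromovProd y (a t) (a n)) (gromovProd y (a n) (b t)) :=
      le_min (by linarith) (by linarith)
    have A2 : (t:ℝ) - ra - rb - 2*δ ≤ gromovProd y (a t) (b t) := by linarith
    unfold gromovProd at A2
    linarith
  have hle : EMetric.hausdorffEdist (Set.range a) (Set.range b)
      ≤ ENNReal.ofReal (3*ra + 3*rb + 4*δ) := by
    apply EMetric.hausdorffEdist_le_of_mem_edist
    · rintro p ⟨t, rfl⟩
      exact ⟨b t, ⟨t, rfl⟩, by rw [edist_dist]; exact ENNReal.ofReal_le_ofReal (key t)⟩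
    · rintro p ⟨t, rfl⟩
      refine ⟨a t, ⟨t, rfl⟩, ?_⟩
      rw [edist_dist]
      exact ENNReal.ofReal_le_ofReal (by rw [dist_comm]; exact key t)
  rw [hab] at hle
  exact ENNReal.ofReal_ne_top (top_le_iff.mp hle)

lemma close_to_ref {δ : ℝ} (hδ : 0 ≤ δ) (hhyp : IsDeltaHyperbolic X δ) (x : X)
    (a f : ℝ≥0 → X) (ha : IsGeodesicRay a) (hf : IsGeodesicRay f) (hf0 : f 0 = x)
    (hfin : EMetric.hausdorffEdist (Set.range f) (Set.range a) ≠ ⊤) :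
    ∀ t : ℝ≥0, ∃ s : ℝ≥0, dist (f t) (a s) ≤ 4 * dist x (a 0) + 4 * δ := by
  set H := EMetric.hausdorffEdist (Set.range f) (Set.range a) with hH
  set D : ℝ := H.toReal + 1 with hDdef
  have hD0 : (0:ℝ) ≤ D := by positivity
  have hclose : ∀ T : ℝ≥0, ∃ S : ℝ≥0, dist (f T) (a S) ≤ D := by
    intro T
    have h1 : EMetric.infEdist (f T) (Set.range a) ≤ H :=
      EMetric.infEdist_le_hausdorffEdist_of_mem ⟨T, rfl⟩
    have h2 : EMetric.infEdist (f T) (Set.range a) < ENNReal.ofReal D :=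
      lt_of_le_of_lt h1 ((ENNReal.lt_ofReal_iff_toReal_lt hfin).mpr (by simp [hDdef]))
    obtain ⟨p, ⟨S, rfl⟩, hp⟩ := EMetric.infEdist_lt_iff.mp h2
    refine ⟨S, le_of_lt ?_⟩
    rwa [edist_dist, ENNReal.ofReal_lt_ofReal_iff_of_nonneg dist_nonneg] at hp
  intro t
  set r := dist x (a 0) with hrdef
  have hr0 : 0 ≤ r := dist_nonneg
  set s : ℝ≥0 := Real.toNNReal (dist (f t) (a 0)) with hsdef
  have hs : (s:ℝ) = dist (f t) (a 0) := Real.coe_toNNReal _ dist_nonneg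
  set T : ℝ≥0 := t + s + Real.toNNReal (r + D) with hTdef
  have hT : (T:ℝ) = (t:ℝ) + s + (r + D) := by
    have h1 : ((r + D).toNNReal : ℝ) = r + D := Real.coe_toNNReal _ (by linarith)
    rw [hTdef, NNReal.coe_add, NNReal.coe_add, h1]
  obtain ⟨S, hS⟩ := hclose T
  have ht0 : (0:ℝ) ≤ (t:ℝ) := t.coe_nonneg
  have dft : dist (f t) x = (t:ℝ) := by rw [← hf0, hf t 0]; simp
  have dfT : dist (f T) x = (T:ℝ) := by rw [← hf0, hf T 0]; simp
  have hs0 : (0:ℝ) ≤ (s:ℝ) := s.coe_nonneg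
  have dftT : dist (f t) (f T) = (T:ℝ) - t := by
    rw [hf t T, abs_of_nonpos (by linarith)]; ring
  have daS : dist (a S) (a 0) = (S:ℝ) := by rw [ha S 0]; simp
  have das : dist (a s) (a 0) = (s:ℝ) := by rw [ha s 0]; simp
  have tri1 : dist (f t) (a 0) ≤ dist (f t) x + dist x (a 0) := dist_triangle _ _ _
  have tri2 : dist (f t) x ≤ dist (f t) (a 0) + dist (a 0) x := dist_triangle _ _ _
  have tri3 : dist (f T) x ≤ dist (f T) (a 0) + dist (a 0) x := dist_triangle _ _ _
  have tri4 : dist (f T) (a 0) ≤ dist (f T) (a S) + dist (a S) (a 0) := dist_triangle _ _ _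
  have hc1 : dist (a 0) x = r := dist_comm (a 0) x
  have hs_le : (s:ℝ) ≤ (t:ℝ) + r := by linarith
  have hs_ge : (t:ℝ) - r ≤ (s:ℝ) := by linarith
  have dfT0 : (T:ℝ) - r ≤ dist (f T) (a 0) := by linarith
  have hS_ge : (T:ℝ) - r - D ≤ (S:ℝ) := by linarith
  have hSs : (s:ℝ) ≤ (S:ℝ) := by linarith
  have daSs : dist (a S) (a s) = (S:ℝ) - s := by
    rw [ha S s, abs_of_nonneg (by linarith)]
  have P1 : (t:ℝ) - r ≤ gromovProd (a 0) (f t) (f T) := by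
    unfold gromovProd; rw [dftT]; linarith
  have P2 : (t:ℝ) + s ≤ gromovProd (a 0) (f T) (a S) := by
    unfold gromovProd; rw [daS]; linarith
  have P3 : (s:ℝ) ≤ gromovProd (a 0) (a S) (a s) := by
    unfold gromovProd; rw [daS, das, daSs]; linarith
  have C1 := gp_min hhyp (f t) (f T) (a S) (a 0)
  have hmin1 : (t:ℝ) - r ≤ min (gromovProd (a 0) (f t) (f T)) (gromovProd (a 0) (f T) (a S)) :=
    le_min (by linarith) (by linarith)
  have Q1 : (t:ℝ) - r - δ ≤ gromovProd (a 0) (f t) (a S) := by linarith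
  have C2 := gp_min hhyp (f t) (a S) (a s) (a 0)
  have hmin2 : (t:ℝ) - r - δ ≤ min (gromovProd (a 0) (f t) (a S)) (gromovProd (a 0) (a S) (a s)) :=
    le_min (by linarith) (by linarith)
  have Q2 : (t:ℝ) - r - 2*δ ≤ gromovProd (a 0) (f t) (a s) := by linarith
  refine ⟨s, ?_⟩
  unfold gromovProd at Q2
  rw [das] at Q2
  linarith

end AuxGromov

/-- For distinct boundary points `a ≠ b` (represented by reference geodesic rays at
infinite Hausdorff distance), the Gromov products `(f(n) | g(m))_y` over all rays
`f` from `x` to `a` and `g` from `y` to `b` are uniformly bounded by some `M₁ > 0`. -/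
theorem gromovProd_bounded_of_distinct_boundary {X : Type*} [MetricSpace X]
    (δ : ℝ) (hδ : 0 ≤ δ) (hhyp : IsDeltaHyperbolic X δ) (hgeo : IsGeodesicSpace X)
    (x y : X) (a b : ℝ≥0 → X) (ha : IsGeodesicRay a) (hb : IsGeodesicRay b)
    (hab : EMetric.hausdorffEdist (Set.range a) (Set.range b) = ⊤) :
    ∃ M₁ : ℝ, 0 < M₁ ∧ ∀ f g : ℝ≥0 → X, RayTo x a f → RayTo y b g →
      ∀ n m : ℝ≥0, gromovProd y (f n) (g m) ≤ M₁ := by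
  obtain ⟨S, hS0, hSb⟩ := ray_bound hδ hhyp y a b ha hb hab
  have hdx : (0:ℝ) ≤ dist x (a 0) := dist_nonneg
  have hdy : (0:ℝ) ≤ dist y (b 0) := dist_nonneg
  refine ⟨S + 4 * dist x (a 0) + 4 * dist y (b 0) + 8 * δ + 1, by linarith, ?_⟩
  rintro f g ⟨hfray, hf0, hffin⟩ ⟨hgray, hg0, hgfin⟩ n m
  obtain ⟨s, hs⟩ := close_to_ref hδ hhyp x a f ha hfray hf0 hffin n
  obtain ⟨s', hs'⟩ := close_to_ref hδ hhyp y b g hb hgray hg0 hgfin m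
  have l1 : gromovProd y (f n) (g m) ≤ gromovProd y (a s) (g m) + dist (f n) (a s) :=
    gp_lip y (f n) (a s) (g m)
  have l2 : gromovProd y (g m) (a s) ≤ gromovProd y (b s') (a s) + dist (g m) (b s') :=
    gp_lip y (g m) (b s') (a s)
  have e1 : gromovProd y (a s) (g m) = gromovProd y (g m) (a s) := gp_comm _ _ _
  have e2 : gromovProd y (b s') (a s) = gromovProd y (a s) (b s') := gp_comm _ _ _
  have := hSb s s'
  linarith
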